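/- Let D be a dyadic grid on a measure space (X, μ) with μ(X) = ∞, satisfying: every Q ∈ D has a parent in D, children of a cube cover it, any two cubes are disjoint or nested, and each child Q₂ of Q₁ satisfies μ(Q₂) ≥ ε μ(Q₁). Fix a > 2/ε. For f measurable with ⨍_Q |f| dμ → 0 as μ(Q) → ∞, let Ω_k = {x : M^D f(x) > a^k} = ∪_j Q_j^k, where {Q_j^k}_j are the maximal dyadic cubes Q with ⨍_Q |f| dμ > a^k. Then the family S = {Q_j^k : k ∈ ℤ, j} is sparse: the sets E(Q_j^k) = Q_j^k \ Ω_{k+1} are pairwise disjoint and μ(Q_j^k) ≤ 2 μ(E(Q_j^k)). -/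

import Mathlib

open MeasureTheory Real Set Filter

/-- The normalized Luxemburg (Orlicz) norm of `v` over the set `E`:
`inf { λ > 0 : μ(E)⁻¹ ∫_E A(|v|/λ) dμ ≤ 1 }`. -/
noncomputable def luxNorm {X : Type*} [MeasurableSpace X] (μ : Measure X)
    (A : ℝ → ℝ) (E : Set X) (v : X → ℝ) : ℝ :=
  sInf {l : ℝ | 0 < l ∧ ∫⁻ x in E, ENNReal.ofReal (A (|v x| / l)) ∂μ ≤ μ E}

/-- A Young function: continuous, convex, increasing on `[0,∞)`, vanishing at `0`,
with superlinear growth at infinity. -/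
def IsYoung (A : ℝ → ℝ) : Prop :=
  ContinuousOn A (Set.Ici 0) ∧ ConvexOn ℝ (Set.Ici 0) A ∧ MonotoneOn A (Set.Ici 0) ∧
    A 0 = 0 ∧ Filter.Tendsto (fun t => A t / t) Filter.atTop Filter.atTop

/-- The Calderón–Zygmund cubes at all heights `a^k`, `a > 2/ε`, form a sparse family:
the sets `E(Q_j^k) = Q_j^k \ Ω_{k+1}` are pairwise disjoint and `μ(Q_j^k) ≤ 2 μ(E(Q_j^k))`. -/
theorem CZ_cubes_sparse {X : Type*} [MeasurableSpace X] (μ : Measure X)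
    (hXinf : μ Set.univ = ⊤)
    (D : Set (Set X)) (hDc : D.Countable)
    (hDm : ∀ Q ∈ D, MeasurableSet Q) (hDfin : ∀ Q ∈ D, 0 < μ Q ∧ μ Q < ⊤)
    (hnest : ∀ Q ∈ D, ∀ Q' ∈ D, Q ∩ Q' = ∅ ∨ Q ⊆ Q' ∨ Q' ⊆ Q)
    (parent : Set X → Set X)
    (hparent : ∀ Q ∈ D, parent Q ∈ D ∧ Q ⊆ parent Q ∧ Q ≠ parent Q)
    (hcover : ∀ Q ∈ D, ∀ x ∈ Q, ∃ Q' ∈ D, x ∈ Q' ∧ Q' ⊆ Q ∧ parent Q' = Q)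
    (ε : ℝ) (hε : 0 < ε) (hε1 : ε ≤ 1)
    (hratio : ∀ Q ∈ D, ENNReal.ofReal ε * μ (parent Q) ≤ μ Q)
    (a : ℝ) (ha : 2 / ε < a)
    (f : X → ℝ) (hf : Measurable f) (hfint : ∀ Q ∈ D, IntegrableOn f Q μ)
    (avg : Set X → ℝ)
    (havg : ∀ Q : Set X, avg Q = ((μ Q).toReal)⁻¹ * ∫ x in Q, |f x| ∂μ)
    (hdecay : ∀ c : ℝ, 0 < c → ∃ M : ℝ, ∀ Q ∈ D, M < (μ Q).toReal → avg Q ≤ c)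
    (𝒬 : ℤ → Set (Set X)) (h𝒬D : ∀ k, 𝒬 k ⊆ D)
    (hmax1 : ∀ k : ℤ, ∀ Q ∈ 𝒬 k, a ^ k < avg Q)
    (hmax2 : ∀ k : ℤ, ∀ Q ∈ 𝒬 k, ∀ Q' ∈ D, Q ⊂ Q' → avg Q' ≤ a ^ k)
    (Ω : ℤ → Set X) (hΩ : ∀ k, Ω k = ⋃ Q ∈ 𝒬 k, Q)
    (hΩeq : ∀ k : ℤ, Ω k = {x | ∃ Q ∈ D, x ∈ Q ∧ a ^ k < avg Q}) :
    (∀ k : ℤ, ∀ Q ∈ 𝒬 k, μ Q ≤ 2 * μ (Q \ Ω (k + 1))) ∧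
      (∀ k k' : ℤ, ∀ Q ∈ 𝒬 k, ∀ Q' ∈ 𝒬 k', (k ≠ k' ∨ Q ≠ Q') →
        (Q \ Ω (k + 1)) ∩ (Q' \ Ω (k' + 1)) = ∅) := by
  have ha0 : (0:ℝ) < a := lt_trans (by positivity) ha
  have ha1 : (1:ℝ) < a := by
    have h2 : (2:ℝ) ≤ 2 / ε := by
      rw [le_div_iff₀ hε]; nlinarith
    linarith
  have hεa : (2:ℝ) < ε * a := by
    have := (div_lt_iff₀ hε).mp ha
    nlinarith
  have hΩmeas : ∀ k, MeasurableSet (Ω k) := by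
    intro k; rw [hΩ]
    exact MeasurableSet.biUnion (hDc.mono (h𝒬D k)) (fun Q hQ => hDm Q (h𝒬D k hQ))
  have hdisj : ∀ k : ℤ, ∀ Q1 ∈ 𝒬 k, ∀ Q2 ∈ 𝒬 k, Q1 ≠ Q2 → Q1 ∩ Q2 = ∅ := by
    intro k Q1 h1 Q2 h2 hne
    rcases hnest Q1 (h𝒬D k h1) Q2 (h𝒬D k h2) with h | h | h
    · exact h
    · exact absurd (hmax2 k Q1 h1 Q2 (h𝒬D k h2) (ssubset_of_subset_of_ne h hne))
        (not_le.mpr (hmax1 k Q2 h2))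
    · exact absurd (hmax2 k Q2 h2 Q1 (h𝒬D k h1) (ssubset_of_subset_of_ne h hne.symm))
        (not_le.mpr (hmax1 k Q1 h1))
  have havg0 : ∀ R : Set X, 0 ≤ avg R := by
    intro R; rw [havg]
    have h1 : 0 ≤ ∫ x in R, |f x| ∂μ := integral_nonneg (fun x => abs_nonneg _)
    positivity
  have hI : ∀ R ∈ D, ∫⁻ x in R, ENNReal.ofReal |f x| ∂μ = ENNReal.ofReal (avg R) * μ R := by
    intro R hR
    have hμR := hDfin R hR
    have ht : (μ R).toReal ≠ 0 := ENNReal.toReal_ne_zero.mpr ⟨hμR.1.ne', hμR.2.ne⟩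
    have hint : Integrable (fun x => |f x|) (μ.restrict R) := (hfint R hR).abs
    rw [← MeasureTheory.ofReal_integral_eq_lintegral_ofReal hint
      (Filter.Eventually.of_forall fun x => abs_nonneg _)]
    have heq : ∫ x in R, |f x| ∂μ = avg R * (μ R).toReal := by
      rw [havg]; field_simp
    rw [heq, ENNReal.ofReal_mul (havg0 R), ENNReal.ofReal_toReal hμR.2.ne]
  constructor
  · intro k Q hQk
    have hQD := h𝒬D k hQk
    have hQfin := hDfin Q hQD
    obtain ⟨hPD, hPsub, hPne⟩ := hparent Q hQD
    set S : Set (Set X) := {Q' | Q' ∈ 𝒬 (k+1) ∧ Q' ⊆ Q} with hSdef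
    have hSc : S.Countable := hDc.mono (fun R hR => h𝒬D (k+1) hR.1)
    haveI := hSc.to_subtype
    have hSmeas : ∀ i : S, MeasurableSet (i : Set X) :=
      fun i => hDm _ (h𝒬D (k+1) i.2.1)
    have hSpd : Pairwise (Function.onFun Disjoint (fun i : S => (i : Set X))) := by
      intro i j hij
      exact Set.disjoint_iff_inter_eq_empty.mpr
        (hdisj (k+1) i i.2.1 j j.2.1 (Subtype.coe_injective.ne hij))
    have hsub : Q ∩ Ω (k+1) ⊆ ⋃ i : S, (i : Set X) := by
      rintro x ⟨hxQ, hxΩ⟩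
      rw [hΩ] at hxΩ
      obtain ⟨Q', hQ', hxQ'⟩ := Set.mem_iUnion₂.mp hxΩ
      have hQ'Q : Q' ⊆ Q := by
        rcases hnest Q' (h𝒬D _ hQ') Q hQD with h | h | h
        · exact absurd (h ▸ (Set.mem_inter hxQ' hxQ)) (Set.notMem_empty x)
        · exact h
        · rcases eq_or_ne Q Q' with he | hne
          · exact he ▸ Set.Subset.rfl
          · exfalso
            have h1 := hmax2 k Q hQk Q' (h𝒬D _ hQ') (ssubset_of_subset_of_ne h hne)
            have h2 := hmax1 (k+1) Q' hQ'
            have h3 : a ^ k < a ^ (k+1) := zpow_lt_zpow_right₀ ha1 (by omega)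
            linarith
      exact Set.mem_iUnion.mpr ⟨⟨Q', hQ', hQ'Q⟩, hxQ'⟩
    have hb0 : ENNReal.ofReal (a ^ k) ≠ 0 := by
      exact ne_of_gt (ENNReal.ofReal_pos.mpr (zpow_pos ha0 k))
    have hbt : ENNReal.ofReal (a ^ k) ≠ ⊤ := ENNReal.ofReal_ne_top
    have key1 : ENNReal.ofReal ε * ENNReal.ofReal (a ^ (k+1)) * μ (Q ∩ Ω (k+1))
        ≤ ENNReal.ofReal (a ^ k) * μ Q := by
      calc ENNReal.ofReal ε * ENNReal.ofReal (a ^ (k+1)) * μ (Q ∩ Ω (k+1))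
          ≤ ENNReal.ofReal ε * ENNReal.ofReal (a ^ (k+1)) * ∑' i : S, μ (i : Set X) := by
            gcongr
            calc μ (Q ∩ Ω (k+1)) ≤ μ (⋃ i : S, (i : Set X)) := measure_mono hsub
              _ = ∑' i : S, μ (i : Set X) := measure_iUnion hSpd hSmeas
        _ = ENNReal.ofReal ε * ∑' i : S, ENNReal.ofReal (a ^ (k+1)) * μ (i : Set X) := by
            rw [ENNReal.tsum_mul_left, mul_assoc]
        _ ≤ ENNReal.ofReal ε * ∑' i : S, ∫⁻ x in (i : Set X), ENNReal.ofReal |f x| ∂μ := by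
            gcongr with i
            rw [hI _ (h𝒬D (k+1) i.2.1)]
            exact mul_le_mul_left (ENNReal.ofReal_le_ofReal (hmax1 (k+1) i i.2.1).le) _
        _ = ENNReal.ofReal ε * ∫⁻ x in ⋃ i : S, (i : Set X), ENNReal.ofReal |f x| ∂μ := by
            rw [lintegral_iUnion hSmeas hSpd]
        _ ≤ ENNReal.ofReal ε * ∫⁻ x in parent Q, ENNReal.ofReal |f x| ∂μ := by
            gcongr
            exact (Set.iUnion_subset fun (i : S) => i.2.2).trans hPsub
        _ = ENNReal.ofReal ε * (ENNReal.ofReal (avg (parent Q)) * μ (parent Q)) := by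
            rw [hI _ hPD]
        _ ≤ ENNReal.ofReal ε * (ENNReal.ofReal (a ^ k) * μ (parent Q)) := by
            gcongr
            exact hmax2 k Q hQk (parent Q) hPD (ssubset_of_subset_of_ne hPsub hPne)
        _ = ENNReal.ofReal (a ^ k) * (ENNReal.ofReal ε * μ (parent Q)) := by ring
        _ ≤ ENNReal.ofReal (a ^ k) * μ Q := by gcongr; exact hratio Q hQD
    have key2 : ENNReal.ofReal (a ^ k) * (2 * μ (Q ∩ Ω (k+1)))
        ≤ ENNReal.ofReal (a ^ k) * μ Q := by
      refine le_trans ?_ key1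
      rw [← mul_assoc]
      refine mul_le_mul_left ?_ _
      have h0 : ENNReal.ofReal (a ^ k) * 2 = ENNReal.ofReal (2 * a ^ k) := by
        rw [mul_comm, ENNReal.ofReal_mul (by norm_num : (0:ℝ) ≤ 2), ENNReal.ofReal_ofNat]
      rw [h0, ← ENNReal.ofReal_mul hε.le]
      apply ENNReal.ofReal_le_ofReal
      have h1 : a ^ (k+1) = a ^ k * a := zpow_add_one₀ ha0.ne' k
      have h2 : (0:ℝ) < a ^ k := zpow_pos ha0 k
      rw [h1]; nlinarith
    have key3 : 2 * μ (Q ∩ Ω (k+1)) ≤ μ Q :=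
      (ENNReal.mul_le_mul_iff_right hb0 hbt).mp key2
    have hsplit : μ (Q ∩ Ω (k+1)) + μ (Q \ Ω (k+1)) = μ Q :=
      measure_inter_add_diff Q (hΩmeas (k+1))
    have hfin : μ Q ≠ ⊤ := hQfin.2.ne
    have : μ Q + μ Q ≤ μ Q + 2 * μ (Q \ Ω (k+1)) := by
      calc μ Q + μ Q = 2 * μ Q := (two_mul _).symm
        _ = 2 * μ (Q ∩ Ω (k+1)) + 2 * μ (Q \ Ω (k+1)) := by
            rw [← hsplit]; ring
        _ ≤ μ Q + 2 * μ (Q \ Ω (k+1)) := add_le_add_left key3 _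
    exact (WithTop.add_le_add_iff_left hfin).mp this
  · intro k k' Q hQ Q' hQ' hne
    have key : ∀ m m' : ℤ, m < m' → ∀ R ∈ 𝒬 m', R ⊆ Ω (m+1) := by
      intro m m' hmm R hR x hx
      rw [hΩeq]
      refine ⟨R, h𝒬D _ hR, hx, lt_of_le_of_lt ?_ (hmax1 m' R hR)⟩
      exact zpow_le_zpow_right₀ ha1.le (by omega)
    rcases lt_trichotomy k k' with hlt | heq | hlt
    · apply Set.eq_empty_of_subset_empty
      rintro x ⟨⟨_, hx1⟩, hx2, _⟩
      exact hx1 (key k k' hlt Q' hQ' hx2)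
    · subst heq
      apply Set.eq_empty_of_subset_empty
      rintro x ⟨⟨hx1, _⟩, hx2, _⟩
      have hQQ' : Q ≠ Q' := hne.resolve_left (by simp)
      exact absurd (hdisj k Q hQ Q' hQ' hQQ' ▸ (Set.mem_inter hx1 hx2))
        (Set.notMem_empty x)
    · apply Set.eq_empty_of_subset_empty
      rintro x ⟨⟨hx1, _⟩, _, hx2⟩
      exact hx2 (key k' k hlt Q hQ hx1)
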